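/- Let H be a Hermitian operator on a finite-dimensional complex Hilbert space with H|0⟩ = 0 and H|E⟩ = E|E⟩ for orthonormal eigenvectors |0⟩, |E⟩ and E > 0. Let A = (|0⟩⟨E| + |E⟩⟨0|)/√2 and A(t) = e^{iHt} A e^{−iHt}. Then: (i) the Hilbert–Schmidt autocorrelation C(t) = Tr(A† A(t)) equals cos(Et); (ii) the speed ‖[H, A(t)]‖ (Hilbert–Schmidt norm) is constant and equals E; and (iii) for 0 ≤ t ≤ π/E, t · E = arccos(C(t)), i.e., the operator quantum speed limit t ≥ arccos(C(t))/‖[H,A]‖ holds with equality. -/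

import Mathlib

open Matrix

attribute [local instance] Matrix.linftyOpNormedRing Matrix.linftyOpNormedAlgebra

lemma mul_vecMulVec' {n : ℕ} (M : Matrix (Fin n) (Fin n) ℂ) (v w : Fin n → ℂ) :
    M * vecMulVec v w = vecMulVec (M.mulVec v) w := by
  ext i j
  simp [mul_apply, vecMulVec_apply, mulVec, dotProduct, Finset.sum_mul]
  exact Finset.sum_congr rfl fun x _ => by ring

lemma vecMulVec_mul' {n : ℕ} (M : Matrix (Fin n) (Fin n) ℂ) (v w : Fin n → ℂ) :
    vecMulVec v w * M = vecMulVec v (w ᵥ* M) := by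
  ext i j
  simp [mul_apply, vecMulVec_apply, vecMul, dotProduct, Finset.mul_sum, mul_assoc]

lemma vecMulVec_mul_vecMulVec' {n : ℕ} (a b c d : Fin n → ℂ) :
    vecMulVec a b * vecMulVec c d = (b ⬝ᵥ c) • vecMulVec a d := by
  ext i j
  simp [mul_apply, vecMulVec_apply, dotProduct, Finset.sum_mul]
  exact Finset.sum_congr rfl fun x _ => by ring

lemma trace_vecMulVec' {n : ℕ} (a b : Fin n → ℂ) :
    Matrix.trace (vecMulVec a b) = b ⬝ᵥ a := by
  simp [Matrix.trace, Matrix.diag, vecMulVec_apply, dotProduct, mul_comm]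

lemma conjTranspose_vecMulVec' {n : ℕ} (a b : Fin n → ℂ) :
    (vecMulVec a (star b))ᴴ = vecMulVec b (star a) := by
  ext i j
  simp [conjTranspose_apply, vecMulVec_apply, mul_comm]

lemma smul_vecMulVec' {n : ℕ} (c : ℂ) (v w : Fin n → ℂ) :
    vecMulVec (c • v) w = c • vecMulVec v w := by
  ext i j
  simp [vecMulVec_apply, mul_assoc]

lemma vecMulVec_smul' {n : ℕ} (c : ℂ) (v w : Fin n → ℂ) :
    vecMulVec v (c • w) = c • vecMulVec v w := by
  ext i j
  simp [vecMulVec_apply]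
  ring

lemma zero_vecMulVec' {n : ℕ} (w : Fin n → ℂ) :
    vecMulVec (0 : Fin n → ℂ) w = 0 := by
  ext i j
  simp [vecMulVec_apply]

lemma vecMulVec_zero' {n : ℕ} (v : Fin n → ℂ) :
    vecMulVec v (0 : Fin n → ℂ) = 0 := by
  ext i j
  simp [vecMulVec_apply]

lemma exp_mulVec_eig {n : ℕ} (M : Matrix (Fin n) (Fin n) ℂ) (v : Fin n → ℂ) (μ : ℂ)
    (h : M.mulVec v = μ • v) :
    (NormedSpace.exp M).mulVec v = Complex.exp μ • v := by
  have hk : ∀ k : ℕ, (M ^ k).mulVec v = μ ^ k • v := by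
    intro k
    induction k with
    | zero => simp
    | succ k ih =>
      rw [pow_succ, pow_succ, ← Matrix.mulVec_mulVec, h, Matrix.mulVec_smul, ih,
        smul_smul, mul_comm]
  let L : Matrix (Fin n) (Fin n) ℂ →L[ℂ] (Fin n → ℂ) :=
    LinearMap.toContinuousLinearMap
      { toFun := fun N => N.mulVec v
        map_add' := fun N₁ N₂ => Matrix.add_mulVec N₁ N₂ v
        map_smul' := fun c N => Matrix.smul_mulVec c N v }
  have hsum : Summable fun k : ℕ => ((Nat.factorial k : ℂ)⁻¹) • M ^ k :=
    NormedSpace.expSeries_summable' M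
  have h1 : L (NormedSpace.exp M) = ∑' k : ℕ, ((Nat.factorial k : ℂ)⁻¹) • (μ ^ k • v) := by
    rw [NormedSpace.exp_eq_tsum ℂ, L.map_tsum hsum]
    exact tsum_congr fun k => by
      show (((Nat.factorial k : ℂ)⁻¹) • M ^ k).mulVec v = _
      rw [Matrix.smul_mulVec, hk k]
  have h2 : (∑' k : ℕ, ((Nat.factorial k : ℂ)⁻¹) • (μ ^ k • v)) = Complex.exp μ • v := by
    have hsμ : Summable fun k : ℕ => ((Nat.factorial k : ℂ)⁻¹) • μ ^ k :=
      NormedSpace.expSeries_summable' μ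
    have ht := (ContinuousLinearMap.smulRight (1 : ℂ →L[ℂ] ℂ) v).map_tsum hsμ
    simp only [ContinuousLinearMap.smulRight_apply, ContinuousLinearMap.one_apply] at ht
    calc (∑' k : ℕ, ((Nat.factorial k : ℂ)⁻¹) • (μ ^ k • v))
        = ∑' k : ℕ, (((Nat.factorial k : ℂ)⁻¹) • μ ^ k) • v :=
          tsum_congr fun k => (smul_assoc _ _ v).symm
      _ = (∑' k : ℕ, ((Nat.factorial k : ℂ)⁻¹) • μ ^ k) • v := ht.symm
      _ = Complex.exp μ • v := by
          rw [Complex.exp_eq_exp_ℂ]; simp only [NormedSpace.exp_eq_tsum ℂ]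
  exact h1.trans h2

theorem stmt_19 {n : ℕ} (H : Matrix (Fin n) (Fin n) ℂ) (hH : H.IsHermitian)
    (ψ0 ψE : Fin n → ℂ) (E : ℝ) (hE : 0 < E)
    (hψ0 : H.mulVec ψ0 = 0) (hψE : H.mulVec ψE = (E : ℂ) • ψE)
    (hnorm0 : star ψ0 ⬝ᵥ ψ0 = 1) (hnormE : star ψE ⬝ᵥ ψE = 1)
    (horth : star ψ0 ⬝ᵥ ψE = 0)
    (A : Matrix (Fin n) (Fin n) ℂ)
    (hA : A = ((Real.sqrt 2)⁻¹ : ℂ) •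
      (Matrix.vecMulVec ψ0 (star ψE) + Matrix.vecMulVec ψE (star ψ0)))
    (At : ℝ → Matrix (Fin n) (Fin n) ℂ)
    (hAt : ∀ t, At t = NormedSpace.exp ((Complex.I * t) • H) * A *
      NormedSpace.exp ((-(Complex.I * t)) • H))
    (C : ℝ → ℂ) (hC : ∀ t, C t = Matrix.trace (Aᴴ * At t)) :
    (∀ t, C t = (Real.cos (E * t) : ℂ)) ∧
    (∀ t, Matrix.trace ((H * At t - At t * H)ᴴ * (H * At t - At t * H)) = ((E : ℂ)) ^ 2) ∧
    (∀ t, 0 ≤ t → t ≤ Real.pi / E → t * E = Real.arccos ((C t).re)) := by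
  set P : Matrix (Fin n) (Fin n) ℂ := vecMulVec ψ0 (star ψE) with hP
  set Q : Matrix (Fin n) (Fin n) ℂ := vecMulVec ψE (star ψ0) with hQ
  set c : ℂ := ((Real.sqrt 2)⁻¹ : ℂ) with hc
  have horth' : star ψE ⬝ᵥ ψ0 = 0 := by
    have h := congrArg star horth
    rw [star_zero] at h
    rw [← h]
    simp [dotProduct, mul_comm]
  have hc2 : c * c = 2⁻¹ := by
    rw [hc, ← mul_inv,
      show ((Real.sqrt 2 : ℝ) : ℂ) * ((Real.sqrt 2 : ℝ) : ℂ) = ((2 : ℝ) : ℂ) by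
        rw [← Complex.ofReal_mul, Real.mul_self_sqrt (by norm_num)]]
    norm_num
  have hcstar : star c = c := by
    simp [hc]
  clear_value P Q c
  -- eigen-action of the evolution operators
  have hU0 : ∀ t : ℝ, (NormedSpace.exp ((Complex.I * t) • H)).mulVec ψ0 = ψ0 := by
    intro t
    have := exp_mulVec_eig ((Complex.I * t) • H) ψ0 0 (by
      rw [Matrix.smul_mulVec, hψ0]; simp)
    simpa using this
  have hUE : ∀ t : ℝ, (NormedSpace.exp ((Complex.I * t) • H)).mulVec ψE
      = Complex.exp (Complex.I * t * E) • ψE := by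
    intro t
    exact exp_mulVec_eig ((Complex.I * t) • H) ψE (Complex.I * t * E) (by
      rw [Matrix.smul_mulVec, hψE, smul_smul])
  -- the adjoint relation between the two evolution operators
  have hconj : ∀ t : ℝ, (NormedSpace.exp ((-(Complex.I * t)) • H))
      = (NormedSpace.exp ((Complex.I * t) • H))ᴴ := by
    intro t
    rw [← Matrix.exp_conjTranspose]
    congr 1
    rw [Matrix.conjTranspose_smul, hH.eq]
    congr 1
    simp [Complex.star_def, Complex.conj_ofReal]
  -- the explicit form of At
  have hAt_eq : ∀ t : ℝ, At t =
      c • (Complex.exp (-(Complex.I * t * E)) • P + Complex.exp (Complex.I * t * E) • Q) := by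
    intro t
    rw [hAt t, hA]
    rw [Matrix.mul_smul, Matrix.smul_mul, Matrix.mul_add, Matrix.add_mul]
    congr 1
    have hUP : NormedSpace.exp ((Complex.I * t) • H) * P = P := by
      rw [hP, mul_vecMulVec', hU0 t]
    have hUQ : NormedSpace.exp ((Complex.I * t) • H) * Q
        = Complex.exp (Complex.I * t * E) • Q := by
      rw [hQ, mul_vecMulVec', hUE t, smul_vecMulVec']
    have hPV : P * NormedSpace.exp ((-(Complex.I * t)) • H)
        = Complex.exp (-(Complex.I * t * E)) • P := by
      rw [hP, vecMulVec_mul', hconj t, ← Matrix.star_mulVec, hUE t]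
      rw [star_smul, vecMulVec_smul']
      congr 1
      rw [Complex.star_def, ← Complex.exp_conj]
      congr 1
      simp [Complex.conj_ofReal]
    have hQV : Q * NormedSpace.exp ((-(Complex.I * t)) • H) = Q := by
      rw [hQ, vecMulVec_mul', hconj t, ← Matrix.star_mulVec, hU0 t]
    rw [hUP, hPV, hUQ, Matrix.smul_mul, hQV]
  -- commutation relations
  have hHP : H * P = 0 := by rw [hP, mul_vecMulVec', hψ0, zero_vecMulVec']
  have hHQ : H * Q = (E : ℂ) • Q := by rw [hQ, mul_vecMulVec', hψE, smul_vecMulVec']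
  have hPH : P * H = (E : ℂ) • P := by
    rw [hP, vecMulVec_mul']
    nth_rewrite 1 [← hH.eq]
    rw [← Matrix.star_mulVec, hψE, star_smul, vecMulVec_smul']
    congr 1
    simp [Complex.star_def, Complex.conj_ofReal]
  have hQH : Q * H = 0 := by
    rw [hQ, vecMulVec_mul']
    nth_rewrite 1 [← hH.eq]
    rw [← Matrix.star_mulVec, hψ0, star_zero, vecMulVec_zero']
  -- trace facts
  have trPQ : Matrix.trace (P * Q) = 1 := by
    rw [hP, hQ, vecMulVec_mul_vecMulVec', hnormE, one_smul, trace_vecMulVec', hnorm0]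
  have trQP : Matrix.trace (Q * P) = 1 := by
    rw [hP, hQ, vecMulVec_mul_vecMulVec', hnorm0, one_smul, trace_vecMulVec', hnormE]
  have trPP : Matrix.trace (P * P) = 0 := by
    rw [hP, vecMulVec_mul_vecMulVec', horth']
    simp
  have trQQ : Matrix.trace (Q * Q) = 0 := by
    rw [hQ, vecMulVec_mul_vecMulVec', horth]
    simp
  -- conjugate transpose of A
  have hAH : Aᴴ = c • (Q + P) := by
    rw [hA, Matrix.conjTranspose_smul, hcstar, Matrix.conjTranspose_add,
      hP, hQ, conjTranspose_vecMulVec', conjTranspose_vecMulVec']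
  -- abbreviations for the phases
  have hab : ∀ t : ℝ, Complex.exp (-(Complex.I * t * E)) * Complex.exp (Complex.I * t * E) = 1 := by
    intro t
    rw [← Complex.exp_add]
    simp
  -- part (i)
  have part1 : ∀ t, C t = (Real.cos (E * t) : ℂ) := by
    intro t
    rw [hC t, hAH, hAt_eq t]
    rw [Matrix.smul_mul, Matrix.mul_smul, Matrix.add_mul, Matrix.mul_add, Matrix.mul_add]
    simp only [Matrix.mul_smul, Matrix.trace_smul, Matrix.trace_add, trPQ, trQP, trPP, trQQ,
      smul_eq_mul, mul_one, mul_zero, add_zero, zero_add]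
    have : (Real.cos (E * t) : ℂ)
        = (Complex.exp (((E * t : ℝ) : ℂ) * Complex.I)
          + Complex.exp (-((E * t : ℝ) : ℂ) * Complex.I)) / 2 := by
      rw [Complex.ofReal_cos, Complex.cos]
    rw [this]
    have h1 : ((E * t : ℝ) : ℂ) * Complex.I = Complex.I * t * E := by push_cast; ring
    have h2 : -((E * t : ℝ) : ℂ) * Complex.I = -(Complex.I * t * E) := by push_cast; ring
    rw [h1, h2]
    linear_combination (Complex.exp (-(Complex.I * t * E)) + Complex.exp (Complex.I * t * E)) * hc2
  refine ⟨part1, ?_, ?_⟩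
  · -- part (ii)
    intro t
    set a : ℂ := Complex.exp (-(Complex.I * t * E)) with ha
    set b : ℂ := Complex.exp (Complex.I * t * E) with hb
    have hstar_a : star a = b := by
      rw [ha, hb, Complex.star_def, ← Complex.exp_conj]
      congr 1
      simp [Complex.conj_ofReal]
    have hstar_b : star b = a := by
      rw [ha, hb, Complex.star_def, ← Complex.exp_conj]
      congr 1
      simp [Complex.conj_ofReal]
    have hstar_E : star ((E : ℝ) : ℂ) = ((E : ℝ) : ℂ) := by
      simp [Complex.star_def, Complex.conj_ofReal]
    have hab' : a * b = 1 := by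
      rw [ha, hb, ← Complex.exp_add]
      simp
    clear_value a b
    have hK : H * At t - At t * H
        = (c * (E : ℂ) * b) • Q - (c * (E : ℂ) * a) • P := by
      rw [hAt_eq t, ← ha, ← hb]
      rw [Matrix.mul_smul, Matrix.smul_mul, Matrix.mul_add, Matrix.add_mul]
      rw [Matrix.mul_smul, Matrix.mul_smul, Matrix.smul_mul, Matrix.smul_mul]
      rw [hHP, hHQ, hPH, hQH]
      simp only [smul_zero, zero_add, add_zero, smul_smul]
      module
    rw [hK]
    rw [Matrix.conjTranspose_sub, Matrix.conjTranspose_smul, Matrix.conjTranspose_smul]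
    rw [hP, hQ, conjTranspose_vecMulVec', conjTranspose_vecMulVec', ← hP, ← hQ]
    rw [Matrix.sub_mul, Matrix.mul_sub, Matrix.mul_sub]
    simp only [Matrix.smul_mul, Matrix.mul_smul, Matrix.trace_sub, Matrix.trace_smul,
      trPQ, trQP, trPP, trQQ, smul_eq_mul, mul_one, mul_zero, smul_zero]
    simp only [star_mul', hstar_a, hstar_b, hcstar, hstar_E]
    linear_combination (2 * c ^ 2 * (E:ℂ) ^ 2) * hab' + (2 * (E:ℂ) ^ 2) * hc2
  · -- part (iii)
    intro t ht0 ht1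
    rw [part1 t]
    rw [Complex.ofReal_re]
    have hEt : E * t ≤ Real.pi := by
      have := (le_div_iff₀ hE).mp ht1
      linarith [this]
    rw [Real.arccos_cos (mul_nonneg hE.le ht0) hEt]
    ring
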